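/- If on a W₃-manifold g((∇_x J)x,(∇_x J)x)=0 for every tangent vector x at every point, then the square norm ‖∇J‖² = g^{ij}g^{kl} g((∇_{e_i}J)e_k,(∇_{e_j}J)e_l) vanishes, i.e., the manifold is isotropic Kähler. -/

import Mathlib

open Finset in
private lemma sum_blocks {m : ℕ} (F : Fin m → Fin m → Fin m → Fin m → ℝ) :
    (∑ i, ∑ j, ∑ k, ∑ l, F i j k l) = ∑ k, ∑ l, ∑ i, ∑ j, F i j k l := by
  calc (∑ i, ∑ j, ∑ k, ∑ l, F i j k l)
      = ∑ i, ∑ k, ∑ j, ∑ l, F i j k l :=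
        Finset.sum_congr rfl fun i _ => Finset.sum_comm
    _ = ∑ k, ∑ i, ∑ j, ∑ l, F i j k l := Finset.sum_comm
    _ = ∑ k, ∑ i, ∑ l, ∑ j, F i j k l :=
        Finset.sum_congr rfl fun k _ => Finset.sum_congr rfl fun i _ => Finset.sum_comm
    _ = ∑ k, ∑ l, ∑ i, ∑ j, F i j k l :=
        Finset.sum_congr rfl fun k _ => Finset.sum_comm

private lemma wswap2 {m : ℕ} (w : Fin m → Fin m → ℝ) (hw : ∀ a c, w a c = w c a)
    (F : Fin m → Fin m → Fin m → Fin m → ℝ) :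
    (∑ i, ∑ j, ∑ k, ∑ l, w i j * w k l * F i j k l)
      = ∑ i, ∑ j, ∑ k, ∑ l, w i j * w k l * F i j l k := by
  refine Finset.sum_congr rfl fun i _ => Finset.sum_congr rfl fun j _ => ?_
  rw [Finset.sum_comm]
  exact Finset.sum_congr rfl fun k _ => Finset.sum_congr rfl fun l _ => by rw [hw l k]

private lemma wswap1 {m : ℕ} (w : Fin m → Fin m → ℝ) (hw : ∀ a c, w a c = w c a)
    (F : Fin m → Fin m → Fin m → Fin m → ℝ) :
    (∑ i, ∑ j, ∑ k, ∑ l, w i j * w k l * F i j k l)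
      = ∑ i, ∑ j, ∑ k, ∑ l, w i j * w k l * F j i k l := by
  rw [Finset.sum_comm]
  exact Finset.sum_congr rfl fun i _ => Finset.sum_congr rfl fun j _ => by rw [hw j i]

private lemma wpair {m : ℕ} (w : Fin m → Fin m → ℝ)
    (F : Fin m → Fin m → Fin m → Fin m → ℝ) :
    (∑ i, ∑ j, ∑ k, ∑ l, w i j * w k l * F i j k l)
      = ∑ i, ∑ j, ∑ k, ∑ l, w i j * w k l * F k l i j := by
  rw [sum_blocks]
  refine Finset.sum_congr rfl fun i _ => Finset.sum_congr rfl fun j _ =>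
    Finset.sum_congr rfl fun k _ => Finset.sum_congr rfl fun l _ => by ring

private lemma sum6_blocks {m : ℕ} (F : Fin m → Fin m → Fin m → Fin m → Fin m → Fin m → ℝ) :
    (∑ i, ∑ j, ∑ k, ∑ l, ∑ c, ∑ d, F i j k l c d)
      = ∑ i, ∑ j, ∑ k, ∑ l, ∑ c, ∑ d, F i j c d k l :=
  Finset.sum_congr rfl fun i _ => Finset.sum_congr rfl fun j _ => sum_blocks _

private lemma sum6_cd {m : ℕ} (F : Fin m → Fin m → Fin m → Fin m → Fin m → Fin m → ℝ) :
    (∑ i, ∑ j, ∑ k, ∑ l, ∑ c, ∑ d, F i j k l c d)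
      = ∑ i, ∑ j, ∑ k, ∑ l, ∑ c, ∑ d, F i j k l d c :=
  Finset.sum_congr rfl fun i _ => Finset.sum_congr rfl fun j _ =>
    Finset.sum_congr rfl fun k _ => Finset.sum_congr rfl fun l _ => Finset.sum_comm

set_option maxHeartbeats 1600000

/-- If on a W₃-manifold `g((∇_x J)x, (∇_x J)x) = 0` for every tangent
vector `x` (at every point), then the square norm
`‖∇J‖² = gⁱʲ gᵏˡ g((∇_{eᵢ}J)eₖ, (∇_{eⱼ}J)eₗ)` vanishes, i.e. the manifold is
isotropic Kähler. Here `B x y` stands for `(∇_x J)y`, modelled on the tangent space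
with a basis `b` and inverse metric components `ginv`. -/
theorem isotropic_vectors_imply_isotropic_Kahler
    {V : Type*} [AddCommGroup V] [Module ℝ V]
    (g : V →ₗ[ℝ] V →ₗ[ℝ] ℝ) (J : V →ₗ[ℝ] V) (B : V →ₗ[ℝ] V →ₗ[ℝ] V)
    {m : ℕ} (b : Module.Basis (Fin m) ℝ V) (ginv : Fin m → Fin m → ℝ)
    (hginv : ∀ i j, (∑ k, ginv i k * g (b k) (b j)) = if i = j then (1:ℝ) else 0)
    (g_symm : ∀ x y, g x y = g y x)
    (J_sq : ∀ x, J (J x) = -x)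
    (norden : ∀ x y, g (J x) (J y) = -(g x y))
    (F_symm : ∀ x y z, g (B x y) z = g (B x z) y)
    (F_hybrid : ∀ x y z, g (B x y) z = g (B x (J y)) (J z))
    (W3 : ∀ x y z, g (B x y) z + g (B y z) x + g (B z x) y = 0)
    (hyp : ∀ x : V, g (B x x) (B x x) = 0) :
    (∑ i, ∑ j, ∑ k, ∑ l, ginv i j * ginv k l * g (B (b i) (b k)) (B (b j) (b l))) = 0 := by
  -- Gram matrix facts
  have hAG : (Matrix.of ginv) * (Matrix.of fun i j => g (b i) (b j)) = 1 := by
    ext i j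
    simpa [Matrix.mul_apply, Matrix.one_apply] using hginv i j
  have hGA : (Matrix.of fun i j => g (b i) (b j)) * (Matrix.of ginv) = 1 :=
    mul_eq_one_comm.mp hAG
  have hGsymm : Matrix.transpose (Matrix.of fun i j => g (b i) (b j))
      = (Matrix.of fun i j => g (b i) (b j)) := by
    ext i j; exact g_symm (b j) (b i)
  have hAT : Matrix.transpose (Matrix.of ginv) = Matrix.of ginv := by
    have h1 : (Matrix.of fun i j => g (b i) (b j)) * Matrix.transpose (Matrix.of ginv) = 1 := by
      have := congrArg Matrix.transpose hAG
      rw [Matrix.transpose_mul, Matrix.transpose_one, hGsymm] at this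
      exact this
    calc Matrix.transpose (Matrix.of ginv)
        = ((Matrix.of ginv) * (Matrix.of fun i j => g (b i) (b j)))
            * Matrix.transpose (Matrix.of ginv) := by rw [hAG, one_mul]
      _ = (Matrix.of ginv) * ((Matrix.of fun i j => g (b i) (b j))
            * Matrix.transpose (Matrix.of ginv)) := by rw [Matrix.mul_assoc]
      _ = Matrix.of ginv := by rw [h1, Matrix.mul_one]
  have ginv_symm : ∀ a c, ginv a c = ginv c a := by
    intro a c
    have := congrArg (fun M => M a c) hAT
    exact (by simpa using this : ginv c a = ginv a c).symm
  -- basis expansion of a vector through the inverse metric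
  have expand : ∀ v : V, (∑ c, (∑ d, ginv c d * g v (b d)) • b c) = v := by
    intro v
    have hcoef : ∀ c, (∑ d, ginv c d * g v (b d)) = b.repr v c := by
      intro c
      have hg : ∀ d, g v (b d) = ∑ p, b.repr v p * g (b p) (b d) := by
        intro d
        conv_lhs => rw [← b.sum_repr v]
        simp only [map_sum, LinearMap.sum_apply, map_smul, LinearMap.smul_apply, smul_eq_mul]
      calc (∑ d, ginv c d * g v (b d))
          = ∑ d, ∑ p, ginv c d * (b.repr v p * g (b p) (b d)) := by
            refine Finset.sum_congr rfl fun d _ => ?_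
            rw [hg d, Finset.mul_sum]
        _ = ∑ p, ∑ d, b.repr v p * (ginv c d * g (b d) (b p)) := by
            rw [Finset.sum_comm]
            exact Finset.sum_congr rfl fun p _ => Finset.sum_congr rfl fun d _ => by
              rw [g_symm (b p) (b d)]; ring
        _ = ∑ p, b.repr v p * (if c = p then (1:ℝ) else 0) := by
            refine Finset.sum_congr rfl fun p _ => ?_
            rw [← Finset.mul_sum, hginv c p]
        _ = b.repr v c := by simp [eq_comm]
    calc (∑ c, (∑ d, ginv c d * g v (b d)) • b c) = ∑ c, b.repr v c • b c := by
          refine Finset.sum_congr rfl fun c _ => ?_; rw [hcoef c]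
      _ = v := b.sum_repr v
  have nondeg : ∀ v : V, (∀ d, g v (b d) = 0) → v = 0 := by
    intro v hv
    have := expand v
    simp only [hv, mul_zero, Finset.sum_const_zero, zero_smul] at this
    simpa using this.symm
  have gJswap : ∀ u v, g (J u) v = g u (J v) := by
    intro u v
    have h := norden u (J v)
    rw [J_sq v] at h
    simpa [map_neg, neg_eq_iff_eq_neg] using h
  have hyb2 : ∀ x y z, g (B x (J y)) z = -(g (B x y) (J z)) := by
    intro x y z
    have h := F_hybrid x (J y) z
    rw [J_sq y] at h
    rw [h]
    simp [map_neg, LinearMap.neg_apply]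
  have hJ2 : ∀ x y, B x (J y) = -(J (B x y)) := by
    intro x y
    have key : ∀ d, g (B x (J y) + J (B x y)) (b d) = 0 := by
      intro d
      have h1 := hyb2 x y (b d)
      have h2 : g (J (B x y)) (b d) = g (B x y) (J (b d)) := gJswap _ _
      simp only [map_add, LinearMap.add_apply]
      rw [h1, h2]; ring
    exact eq_neg_of_add_eq_zero_left (nondeg _ key)
  -- expansion lemmas
  have expandApp : ∀ (P : V →ₗ[ℝ] V) (u z : V),
      g (P u) z = ∑ c, ∑ d, ginv c d * g u (b d) * g (P (b c)) z := by
    intro P u z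
    conv_lhs => rw [← expand u]
    simp only [map_sum, map_smul, LinearMap.sum_apply, LinearMap.smul_apply, smul_eq_mul]
    refine Finset.sum_congr rfl fun c _ => ?_
    rw [Finset.sum_mul]
  have expandB : ∀ (u y z : V),
      g (B u y) z = ∑ c, ∑ d, ginv c d * g u (b d) * g (B (b c) y) z := by
    intro u y z
    conv_lhs => rw [← expand u]
    simp only [map_sum, map_smul, LinearMap.sum_apply, LinearMap.smul_apply, smul_eq_mul]
    refine Finset.sum_congr rfl fun c _ => ?_
    rw [Finset.sum_mul]
  have expandPair : ∀ (u v : V),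
      g u v = ∑ c, ∑ d, ginv c d * g v (b d) * g u (b c) := by
    intro u v
    conv_lhs => rw [← expand v]
    simp only [map_sum, map_smul, smul_eq_mul]
    refine Finset.sum_congr rfl fun c _ => ?_
    rw [Finset.sum_mul]
  -- trace cyclicity and the vanishing of the trace of B x
  have cyc : ∀ P Q : V →ₗ[ℝ] V,
      (∑ i, ∑ j, ginv i j * g (P (Q (b i))) (b j))
        = ∑ i, ∑ j, ginv i j * g (Q (P (b i))) (b j) := by
    intro P Q
    have lhs_eq : (∑ i, ∑ j, ginv i j * g (P (Q (b i))) (b j))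
        = ∑ i, ∑ j, ∑ c, ∑ d, ginv i j * (ginv c d * g (Q (b i)) (b d) * g (P (b c)) (b j)) := by
      refine Finset.sum_congr rfl fun i _ => Finset.sum_congr rfl fun j _ => ?_
      rw [expandApp P (Q (b i)) (b j), Finset.mul_sum]
      exact Finset.sum_congr rfl fun c _ => by rw [Finset.mul_sum]
    have rhs_eq : (∑ i, ∑ j, ginv i j * g (Q (P (b i))) (b j))
        = ∑ i, ∑ j, ∑ c, ∑ d, ginv i j * (ginv c d * g (P (b i)) (b d) * g (Q (b c)) (b j)) := by
      refine Finset.sum_congr rfl fun i _ => Finset.sum_congr rfl fun j _ => ?_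
      rw [expandApp Q (P (b i)) (b j), Finset.mul_sum]
      exact Finset.sum_congr rfl fun c _ => by rw [Finset.mul_sum]
    rw [lhs_eq, rhs_eq]
    rw [show (∑ i, ∑ j, ∑ c, ∑ d, ginv i j * (ginv c d * g (P (b i)) (b d) * g (Q (b c)) (b j)))
        = ∑ c, ∑ d, ∑ i, ∑ j, ginv i j * (ginv c d * g (P (b i)) (b d) * g (Q (b c)) (b j)) from
      sum_blocks _]
    refine Finset.sum_congr rfl fun i _ => Finset.sum_congr rfl fun j _ =>
      Finset.sum_congr rfl fun c _ => Finset.sum_congr rfl fun d _ => by ring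
  have tauzero : ∀ x : V, (∑ i, ∑ j, ginv i j * g (B x (b i)) (b j)) = 0 := by
    intro x
    have hc := cyc ((B x) ∘ₗ J) J
    simp only [LinearMap.comp_apply, J_sq, hJ2, map_neg, LinearMap.neg_apply, mul_neg,
      neg_neg] at hc
    simp only [Finset.sum_neg_distrib] at hc
    linarith
  have tLv : ∀ v : V, (∑ i, ∑ j, ginv i j * g (B (b i) (b j)) v) = 0 := by
    intro v
    have h1 : (∑ i, ∑ j, ginv i j *
        (g (B (b i) (b j)) v + g (B (b j) v) (b i) + g (B v (b i)) (b j))) = 0 := by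
      refine Finset.sum_eq_zero fun i _ => Finset.sum_eq_zero fun j _ => ?_
      rw [W3 (b i) (b j) v, mul_zero]
    simp only [mul_add, Finset.sum_add_distrib] at h1
    have hB : (∑ i, ∑ j, ginv i j * g (B (b j) v) (b i))
        = ∑ i, ∑ j, ginv i j * g (B (b i) (b j)) v := by
      calc (∑ i, ∑ j, ginv i j * g (B (b j) v) (b i))
          = ∑ i, ∑ j, ginv i j * g (B (b j) (b i)) v :=
            Finset.sum_congr rfl fun i _ => Finset.sum_congr rfl fun j _ => by
              rw [F_symm (b j) v (b i)]
        _ = ∑ i, ∑ j, ginv i j * g (B (b i) (b j)) v := by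
            rw [Finset.sum_comm]
            exact Finset.sum_congr rfl fun i _ => Finset.sum_congr rfl fun j _ => by
              rw [ginv_symm j i]
    rw [hB, tauzero v] at h1
    linarith
  -- polarization
  have polarI : ∀ x y : V,
      g (B x y) (B x y) + g (B x y) (B y x) + g (B y x) (B x y) + g (B y x) (B y x)
        + g (B x x) (B y y) + g (B y y) (B x x) = 0 := by
    intro x y
    have h1 := hyp (x + y)
    have h2 := hyp (x - y)
    have h3 := hyp x
    have h4 := hyp y
    simp only [map_add, map_sub, LinearMap.add_apply, LinearMap.sub_apply] at h1 h2
    linear_combination h1 / 2 + h2 / 2 - h3 - h4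
  have polarM : ∀ x z y : V,
      g (B x y) (B z y) + g (B z y) (B x y) + g (B x y) (B y z) + g (B z y) (B y x)
        + g (B y x) (B z y) + g (B y z) (B x y) + g (B y x) (B y z) + g (B y z) (B y x)
        + g (B x z) (B y y) + g (B z x) (B y y) + g (B y y) (B x z) + g (B y y) (B z x) = 0 := by
    intro x z y
    have h1 := polarI (x + z) y
    have h2 := polarI x y
    have h3 := polarI z y
    simp only [map_add, LinearMap.add_apply] at h1
    linear_combination h1 - h2 - h3
  have polarK : ∀ x z y u : V,
      g (B x y) (B z u) + g (B x u) (B z y)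
      + g (B z y) (B x u) + g (B z u) (B x y)
      + g (B x y) (B u z) + g (B x u) (B y z)
      + g (B z y) (B u x) + g (B z u) (B y x)
      + g (B y x) (B z u) + g (B u x) (B z y)
      + g (B y z) (B x u) + g (B u z) (B x y)
      + g (B y x) (B u z) + g (B u x) (B y z)
      + g (B y z) (B u x) + g (B u z) (B y x)
      + g (B x z) (B y u) + g (B x z) (B u y)
      + g (B z x) (B y u) + g (B z x) (B u y)
      + g (B y u) (B x z) + g (B u y) (B x z)
      + g (B y u) (B z x) + g (B u y) (B z x) = 0 := by
    intro x z y u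
    have h1 := polarM x z (y + u)
    have h2 := polarM x z y
    have h3 := polarM x z u
    simp only [map_add, LinearMap.add_apply] at h1
    linarith
    -- abbreviated names for the three main contractions
  -- Part A : S + C + E = 0  (from W3)
  have hW3c : (∑ i, ∑ j, ∑ k, ∑ l, ginv i j * ginv k l *
      (g (B (b i) (b k)) (B (b j) (b l)) + g (B (b k) (B (b j) (b l))) (b i)
        + g (B (B (b j) (b l)) (b i)) (b k))) = 0 := by
    refine Finset.sum_eq_zero fun i _ => Finset.sum_eq_zero fun j _ =>
      Finset.sum_eq_zero fun k _ => Finset.sum_eq_zero fun l _ => ?_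
    rw [W3 (b i) (b k) (B (b j) (b l)), mul_zero]
  simp only [mul_add, Finset.sum_add_distrib] at hW3c
  have hX2 : (∑ i, ∑ j, ∑ k, ∑ l, ginv i j * ginv k l * g (B (b k) (B (b j) (b l))) (b i))
      = ∑ i, ∑ j, ∑ k, ∑ l, ginv i j * ginv k l * g (B (b i) (b k)) (B (b l) (b j)) := by
    calc (∑ i, ∑ j, ∑ k, ∑ l, ginv i j * ginv k l * g (B (b k) (B (b j) (b l))) (b i))
        = ∑ i, ∑ j, ∑ k, ∑ l, ginv i j * ginv k l * g (B (b k) (b i)) (B (b j) (b l)) :=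
          Finset.sum_congr rfl fun i _ => Finset.sum_congr rfl fun j _ =>
            Finset.sum_congr rfl fun k _ => Finset.sum_congr rfl fun l _ => by
              rw [F_symm (b k) (B (b j) (b l)) (b i)]
      _ = ∑ i, ∑ j, ∑ k, ∑ l, ginv i j * ginv k l * g (B (b i) (b k)) (B (b l) (b j)) := by
          exact wpair ginv (fun i j k l => g (B (b k) (b i)) (B (b j) (b l)))
  have hX3 : (∑ i, ∑ j, ∑ k, ∑ l, ginv i j * ginv k l * g (B (B (b j) (b l)) (b i)) (b k))
      = ∑ i, ∑ j, ∑ k, ∑ l, ginv i j * ginv k l * g (B (B (b i) (b k)) (b j)) (b l) := by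
    have e1 := wswap1 ginv ginv_symm (fun i j k l => g (B (B (b j) (b l)) (b i)) (b k))
    have e2 := wswap2 ginv ginv_symm (fun i j k l => g (B (B (b i) (b l)) (b j)) (b k))
    exact e1.trans e2
  rw [hX2, hX3] at hW3c
  -- hW3c : S + C + E = 0
  -- Part B : E = C
  have hEv6 : (∑ i, ∑ j, ∑ k, ∑ l, ginv i j * ginv k l * g (B (B (b i) (b k)) (b j)) (b l))
      = ∑ i, ∑ j, ∑ k, ∑ l, ∑ c, ∑ d, ginv i j * ginv k l *
          (ginv c d * g (B (b i) (b k)) (b d) * g (B (b c) (b j)) (b l)) := by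
    refine Finset.sum_congr rfl fun i _ => Finset.sum_congr rfl fun j _ =>
      Finset.sum_congr rfl fun k _ => Finset.sum_congr rfl fun l _ => ?_
    rw [expandB (B (b i) (b k)) (b j) (b l), Finset.mul_sum]
    exact Finset.sum_congr rfl fun c _ => by rw [Finset.mul_sum]
  have hCv6 : (∑ i, ∑ j, ∑ k, ∑ l, ginv i j * ginv k l * g (B (b i) (b k)) (B (b l) (b j)))
      = ∑ i, ∑ j, ∑ k, ∑ l, ∑ c, ∑ d, ginv i j * ginv k l *
          (ginv c d * g (B (b l) (b j)) (b d) * g (B (b i) (b k)) (b c)) := by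
    refine Finset.sum_congr rfl fun i _ => Finset.sum_congr rfl fun j _ =>
      Finset.sum_congr rfl fun k _ => Finset.sum_congr rfl fun l _ => ?_
    rw [expandPair (B (b i) (b k)) (B (b l) (b j)), Finset.mul_sum]
    exact Finset.sum_congr rfl fun c _ => by rw [Finset.mul_sum]
  have h6 : (∑ i, ∑ j, ∑ k, ∑ l, ∑ c, ∑ d, ginv i j * ginv k l *
          (ginv c d * g (B (b l) (b j)) (b d) * g (B (b i) (b k)) (b c)))
      = ∑ i, ∑ j, ∑ k, ∑ l, ∑ c, ∑ d, ginv i j * ginv k l *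
          (ginv c d * g (B (b i) (b k)) (b d) * g (B (b c) (b j)) (b l)) := by
    have e1 := sum6_blocks (fun i j k l c d => ginv i j * ginv k l *
          (ginv c d * g (B (b l) (b j)) (b d) * g (B (b i) (b k)) (b c)))
    have e2 := sum6_cd (fun i j k l c d => ginv i j * ginv c d *
          (ginv k l * g (B (b d) (b j)) (b l) * g (B (b i) (b c)) (b k)))
    refine (e1.trans (e2.trans ?_))
    refine Finset.sum_congr rfl fun i _ => Finset.sum_congr rfl fun j _ =>
      Finset.sum_congr rfl fun k _ => Finset.sum_congr rfl fun l _ =>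
      Finset.sum_congr rfl fun c _ => Finset.sum_congr rfl fun d _ => ?_
    rw [ginv_symm d c, F_symm (b i) (b d) (b k)]
    ring
  have hEC : (∑ i, ∑ j, ∑ k, ∑ l, ginv i j * ginv k l * g (B (B (b i) (b k)) (b j)) (b l))
      = ∑ i, ∑ j, ∑ k, ∑ l, ginv i j * ginv k l * g (B (b i) (b k)) (B (b l) (b j)) := by
    rw [hEv6, hCv6]; exact h6.symm
  -- Part C : contraction of the polarization identity
  have hKc : (∑ i, ∑ j, ∑ k, ∑ l, ginv i j * ginv k l *
      (g (B (b i) (b k)) (B (b j) (b l))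
        + g (B (b i) (b l)) (B (b j) (b k))
        + g (B (b j) (b k)) (B (b i) (b l))
        + g (B (b j) (b l)) (B (b i) (b k))
        + g (B (b i) (b k)) (B (b l) (b j))
        + g (B (b i) (b l)) (B (b k) (b j))
        + g (B (b j) (b k)) (B (b l) (b i))
        + g (B (b j) (b l)) (B (b k) (b i))
        + g (B (b k) (b i)) (B (b j) (b l))
        + g (B (b l) (b i)) (B (b j) (b k))
        + g (B (b k) (b j)) (B (b i) (b l))
        + g (B (b l) (b j)) (B (b i) (b k))
        + g (B (b k) (b i)) (B (b l) (b j))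
        + g (B (b l) (b i)) (B (b k) (b j))
        + g (B (b k) (b j)) (B (b l) (b i))
        + g (B (b l) (b j)) (B (b k) (b i))
        + g (B (b i) (b j)) (B (b k) (b l))
        + g (B (b i) (b j)) (B (b l) (b k))
        + g (B (b j) (b i)) (B (b k) (b l))
        + g (B (b j) (b i)) (B (b l) (b k))
        + g (B (b k) (b l)) (B (b i) (b j))
        + g (B (b l) (b k)) (B (b i) (b j))
        + g (B (b k) (b l)) (B (b j) (b i))
        + g (B (b l) (b k)) (B (b j) (b i)))) = 0 := by
    refine Finset.sum_eq_zero fun i _ => Finset.sum_eq_zero fun j _ =>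
      Finset.sum_eq_zero fun k _ => Finset.sum_eq_zero fun l _ => ?_
    rw [polarK (b i) (b j) (b k) (b l), mul_zero]
  simp (config := { maxSteps := 10000000 }) only [mul_add, Finset.sum_add_distrib] at hKc
  have tLv2 : ∀ v : V, (∑ i, ∑ j, ginv i j * g (B (b j) (b i)) v) = 0 := by
    intro v
    calc (∑ i, ∑ j, ginv i j * g (B (b j) (b i)) v)
        = ∑ i, ∑ j, ginv j i * g (B (b i) (b j)) v := Finset.sum_comm
      _ = ∑ i, ∑ j, ginv i j * g (B (b i) (b j)) v :=
          Finset.sum_congr rfl fun i _ => Finset.sum_congr rfl fun j _ => by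
            rw [ginv_symm j i]
      _ = 0 := tLv v
  have z1 : ∀ v : Fin m → Fin m → V,
      (∑ i, ∑ j, ∑ k, ∑ l, ginv i j * ginv k l * g (B (b i) (b j)) (v k l)) = 0 := by
    intro v
    rw [sum_blocks (fun i j k l => ginv i j * ginv k l * g (B (b i) (b j)) (v k l))]
    refine Finset.sum_eq_zero fun k _ => Finset.sum_eq_zero fun l _ => ?_
    have hpull : (∑ i, ∑ j, ginv i j * ginv k l * g (B (b i) (b j)) (v k l))
        = ginv k l * ∑ i, ∑ j, ginv i j * g (B (b i) (b j)) (v k l) := by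
      rw [Finset.mul_sum]
      refine Finset.sum_congr rfl fun i _ => ?_
      rw [Finset.mul_sum]
      exact Finset.sum_congr rfl fun j _ => by ring
    rw [hpull, tLv, mul_zero]
  have z2 : ∀ v : Fin m → Fin m → V,
      (∑ i, ∑ j, ∑ k, ∑ l, ginv i j * ginv k l * g (B (b j) (b i)) (v k l)) = 0 := by
    intro v
    rw [sum_blocks (fun i j k l => ginv i j * ginv k l * g (B (b j) (b i)) (v k l))]
    refine Finset.sum_eq_zero fun k _ => Finset.sum_eq_zero fun l _ => ?_
    have hpull : (∑ i, ∑ j, ginv i j * ginv k l * g (B (b j) (b i)) (v k l))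
        = ginv k l * ∑ i, ∑ j, ginv i j * g (B (b j) (b i)) (v k l) := by
      rw [Finset.mul_sum]
      refine Finset.sum_congr rfl fun i _ => ?_
      rw [Finset.mul_sum]
      exact Finset.sum_congr rfl fun j _ => by ring
    rw [hpull, tLv2, mul_zero]
  have gsum : ∀ (p q r s' : Fin m → Fin m → Fin m → Fin m → Fin m),
      (∑ i, ∑ j, ∑ k, ∑ l, ginv i j * ginv k l *
          g (B (b (p i j k l)) (b (q i j k l))) (B (b (r i j k l)) (b (s' i j k l))))
        = ∑ i, ∑ j, ∑ k, ∑ l, ginv i j * ginv k l *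
          g (B (b (r i j k l)) (b (s' i j k l))) (B (b (p i j k l)) (b (q i j k l))) := by
    intro p q r s'
    refine Finset.sum_congr rfl fun i _ => Finset.sum_congr rfl fun j _ =>
      Finset.sum_congr rfl fun k _ => Finset.sum_congr rfl fun l _ => by rw [g_symm]
  -- S-group
  have eS2 : (∑ i, ∑ j, ∑ k, ∑ l, ginv i j * ginv k l * g (B (b i) (b l)) (B (b j) (b k)))
      = ∑ i, ∑ j, ∑ k, ∑ l, ginv i j * ginv k l * g (B (b i) (b k)) (B (b j) (b l)) := by
    exact (wswap2 ginv ginv_symm (fun i j k l => g (B (b i) (b k)) (B (b j) (b l)))).symm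
  have eS3 : (∑ i, ∑ j, ∑ k, ∑ l, ginv i j * ginv k l * g (B (b j) (b k)) (B (b i) (b l)))
      = ∑ i, ∑ j, ∑ k, ∑ l, ginv i j * ginv k l * g (B (b i) (b k)) (B (b j) (b l)) := by
    exact (wswap1 ginv ginv_symm (fun i j k l => g (B (b i) (b k)) (B (b j) (b l)))).symm
  have eS4 : (∑ i, ∑ j, ∑ k, ∑ l, ginv i j * ginv k l * g (B (b j) (b l)) (B (b i) (b k)))
      = ∑ i, ∑ j, ∑ k, ∑ l, ginv i j * ginv k l * g (B (b i) (b k)) (B (b j) (b l)) := by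
    exact (gsum (fun i j k l => j) (fun i j k l => l) (fun i j k l => i) (fun i j k l => k))
  have eS5 : (∑ i, ∑ j, ∑ k, ∑ l, ginv i j * ginv k l * g (B (b k) (b i)) (B (b l) (b j)))
      = ∑ i, ∑ j, ∑ k, ∑ l, ginv i j * ginv k l * g (B (b i) (b k)) (B (b j) (b l)) := by
    exact (wpair ginv (fun i j k l => g (B (b i) (b k)) (B (b j) (b l)))).symm
  have eS6 : (∑ i, ∑ j, ∑ k, ∑ l, ginv i j * ginv k l * g (B (b l) (b i)) (B (b k) (b j)))
      = ∑ i, ∑ j, ∑ k, ∑ l, ginv i j * ginv k l * g (B (b j) (b k)) (B (b i) (b l)) := by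
    exact (wpair ginv (fun i j k l => g (B (b j) (b k)) (B (b i) (b l)))).symm
  have eS7 : (∑ i, ∑ j, ∑ k, ∑ l, ginv i j * ginv k l * g (B (b k) (b j)) (B (b l) (b i)))
      = ∑ i, ∑ j, ∑ k, ∑ l, ginv i j * ginv k l * g (B (b i) (b l)) (B (b j) (b k)) := by
    exact (wpair ginv (fun i j k l => g (B (b i) (b l)) (B (b j) (b k)))).symm
  have eS8 : (∑ i, ∑ j, ∑ k, ∑ l, ginv i j * ginv k l * g (B (b l) (b j)) (B (b k) (b i)))
      = ∑ i, ∑ j, ∑ k, ∑ l, ginv i j * ginv k l * g (B (b k) (b i)) (B (b l) (b j)) := by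
    exact (gsum (fun i j k l => l) (fun i j k l => j) (fun i j k l => k) (fun i j k l => i))
  -- C-group
  have eC2 : (∑ i, ∑ j, ∑ k, ∑ l, ginv i j * ginv k l * g (B (b i) (b l)) (B (b k) (b j)))
      = ∑ i, ∑ j, ∑ k, ∑ l, ginv i j * ginv k l * g (B (b i) (b k)) (B (b l) (b j)) := by
    exact (wswap2 ginv ginv_symm (fun i j k l => g (B (b i) (b k)) (B (b l) (b j)))).symm
  have eC3 : (∑ i, ∑ j, ∑ k, ∑ l, ginv i j * ginv k l * g (B (b j) (b k)) (B (b l) (b i)))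
      = ∑ i, ∑ j, ∑ k, ∑ l, ginv i j * ginv k l * g (B (b i) (b k)) (B (b l) (b j)) := by
    exact (wswap1 ginv ginv_symm (fun i j k l => g (B (b i) (b k)) (B (b l) (b j)))).symm
  have eC4 : (∑ i, ∑ j, ∑ k, ∑ l, ginv i j * ginv k l * g (B (b j) (b l)) (B (b k) (b i)))
      = ∑ i, ∑ j, ∑ k, ∑ l, ginv i j * ginv k l * g (B (b j) (b k)) (B (b l) (b i)) := by
    exact (wswap2 ginv ginv_symm (fun i j k l => g (B (b j) (b k)) (B (b l) (b i)))).symm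
  have eC5 : (∑ i, ∑ j, ∑ k, ∑ l, ginv i j * ginv k l * g (B (b k) (b i)) (B (b j) (b l)))
      = ∑ i, ∑ j, ∑ k, ∑ l, ginv i j * ginv k l * g (B (b j) (b l)) (B (b k) (b i)) := by
    exact (gsum (fun i j k l => k) (fun i j k l => i) (fun i j k l => j) (fun i j k l => l))
  have eC6 : (∑ i, ∑ j, ∑ k, ∑ l, ginv i j * ginv k l * g (B (b l) (b i)) (B (b j) (b k)))
      = ∑ i, ∑ j, ∑ k, ∑ l, ginv i j * ginv k l * g (B (b j) (b k)) (B (b l) (b i)) := by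
    exact (gsum (fun i j k l => l) (fun i j k l => i) (fun i j k l => j) (fun i j k l => k))
  have eC7 : (∑ i, ∑ j, ∑ k, ∑ l, ginv i j * ginv k l * g (B (b k) (b j)) (B (b i) (b l)))
      = ∑ i, ∑ j, ∑ k, ∑ l, ginv i j * ginv k l * g (B (b i) (b l)) (B (b k) (b j)) := by
    exact (gsum (fun i j k l => k) (fun i j k l => j) (fun i j k l => i) (fun i j k l => l))
  have eC8 : (∑ i, ∑ j, ∑ k, ∑ l, ginv i j * ginv k l * g (B (b l) (b j)) (B (b i) (b k)))
      = ∑ i, ∑ j, ∑ k, ∑ l, ginv i j * ginv k l * g (B (b i) (b k)) (B (b l) (b j)) := by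
    exact (gsum (fun i j k l => l) (fun i j k l => j) (fun i j k l => i) (fun i j k l => k))
  -- zero group
  have zA : (∑ i, ∑ j, ∑ k, ∑ l, ginv i j * ginv k l * g (B (b i) (b j)) (B (b k) (b l))) = 0 := z1 (fun k l => B (b k) (b l))
  have zB : (∑ i, ∑ j, ∑ k, ∑ l, ginv i j * ginv k l * g (B (b i) (b j)) (B (b l) (b k))) = 0 := z1 (fun k l => B (b l) (b k))
  have zC : (∑ i, ∑ j, ∑ k, ∑ l, ginv i j * ginv k l * g (B (b j) (b i)) (B (b k) (b l))) = 0 := z2 (fun k l => B (b k) (b l))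
  have zD : (∑ i, ∑ j, ∑ k, ∑ l, ginv i j * ginv k l * g (B (b j) (b i)) (B (b l) (b k))) = 0 := z2 (fun k l => B (b l) (b k))
  have zE : (∑ i, ∑ j, ∑ k, ∑ l, ginv i j * ginv k l * g (B (b k) (b l)) (B (b i) (b j))) = 0 := by
    rw [gsum (fun i j k l => k) (fun i j k l => l) (fun i j k l => i) (fun i j k l => j)]
    exact zA
  have zF : (∑ i, ∑ j, ∑ k, ∑ l, ginv i j * ginv k l * g (B (b l) (b k)) (B (b i) (b j))) = 0 := by
    rw [gsum (fun i j k l => l) (fun i j k l => k) (fun i j k l => i) (fun i j k l => j)]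
    exact zB
  have zG : (∑ i, ∑ j, ∑ k, ∑ l, ginv i j * ginv k l * g (B (b k) (b l)) (B (b j) (b i))) = 0 := by
    rw [gsum (fun i j k l => k) (fun i j k l => l) (fun i j k l => j) (fun i j k l => i)]
    exact zC
  have zH : (∑ i, ∑ j, ∑ k, ∑ l, ginv i j * ginv k l * g (B (b l) (b k)) (B (b j) (b i))) = 0 := by
    rw [gsum (fun i j k l => l) (fun i j k l => k) (fun i j k l => j) (fun i j k l => i)]
    exact zD
  -- conclude
  linarith [hW3c, hEC, hKc, eS2, eS3, eS4, eS5, eS6, eS7, eS8,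
    eC2, eC3, eC4, eC5, eC6, eC7, eC8, zA, zB, zC, zD, zE, zF, zG, zH]
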